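/- Let J be a finite nilpotent group acting by automorphisms on a finite q-group N_q, where q divides |J|. Write J = J_q × J'_q with J_q the Sylow q-subgroup and J'_q the Hall q'-subgroup. Then the restriction map res : H¹(J, N_q) → H¹(J_q, N_q) is injective, with image the set of J'_q-invariant classes H¹(J_q, N_q)^{J'_q}. -/

import Mathlib

section

variable {N J : Type*} [Group N] [Group J] (φ : J →* MulAut N)

/-- Crossed homomorphisms `J → N`. -/
def CrossedHom : Type _ := {f : J → N // ∀ j j', f (j * j') = f j * φ j (f j')}

/-- The cohomology relation on crossed homomorphisms (on raw functions). -/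
def Cohomologous (f g : J → N) : Prop :=
  ∃ n : N, ∀ j, g j = n⁻¹ * f j * φ j n

/-- The cohomology relation on crossed homomorphisms. -/
def cohRel (f g : CrossedHom φ) : Prop := Cohomologous φ f.1 g.1

end

namespace Stmt8Aux

/-- `cohRel` is an equivalence relation. -/
theorem coh_equiv {N J : Type*} [Group N] [Group J] (φ : J →* MulAut N) :
    Equivalence (cohRel φ) := by
  constructor
  · intro f
    exact ⟨1, fun j => by simp⟩
  · rintro f g ⟨n, h⟩
    exact ⟨n⁻¹, fun j => by rw [h j, map_inv]; group⟩
  · rintro f g h ⟨n, h1⟩ ⟨m, h2⟩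
    exact ⟨n * m, fun j => by rw [h2 j, h1 j, map_mul, mul_inv_rev]; group⟩

/-- Restrict an action to an invariant subgroup. -/
def restrictAut {B M : Type*} [Group B] [Group M] (ψ : B →* MulAut M) (H : Subgroup M)
    (hH : ∀ (b : B) (x : M), x ∈ H → ψ b x ∈ H) : B →* MulAut ↥H :=
  MonoidHom.mk' (fun b =>
    { toFun := fun x => ⟨ψ b x.1, hH b x.1 x.2⟩
      invFun := fun x => ⟨ψ b⁻¹ x.1, hH b⁻¹ x.1 x.2⟩
      left_inv := fun x => Subtype.ext <| by
        show ψ b⁻¹ (ψ b x.1) = x.1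
        rw [← MulAut.mul_apply, ← map_mul, inv_mul_cancel, map_one, MulAut.one_apply]
      right_inv := fun x => Subtype.ext <| by
        show ψ b (ψ b⁻¹ x.1) = x.1
        rw [← MulAut.mul_apply, ← map_mul, mul_inv_cancel, map_one, MulAut.one_apply]
      map_mul' := fun x y => Subtype.ext <| by
        show ψ b (x.1 * y.1) = ψ b x.1 * ψ b y.1
        exact map_mul _ _ _ })
    (fun a b => by
      ext x
      show ψ (a * b) x.1 = ψ a (ψ b x.1)
      rw [map_mul, MulAut.mul_apply])

@[simp] lemma restrictAut_apply {B M : Type*} [Group B] [Group M] (ψ : B →* MulAut M)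
    (H : Subgroup M) (hH) (b : B) (x : ↥H) :
    ((restrictAut ψ H hH b x : ↥H) : M) = ψ b x.1 := rfl

/-- Vanishing of `H¹` for a coprime action on an abelian group. -/
theorem h1_vanish_comm {B M : Type*} [Group B] [Finite B] [CommGroup M] [Finite M]
    (hcop : Nat.Coprime (Nat.card M) (Nat.card B)) (ψ : B →* MulAut M)
    (r : B → M) (hr : ∀ a b, r (a * b) = r a * ψ a (r b)) :
    ∃ n : M, ∀ b, r b = n⁻¹ * ψ b n := by
  have : Fintype B := Fintype.ofFinite B
  set P : M := ∏ b : B, r b with hP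
  have key : ∀ a, (r a) ^ (Nat.card B) = P * (ψ a P)⁻¹ := by
    intro a
    have h1 : ∏ b : B, r (a * b) = P := Fintype.prod_equiv (Equiv.mulLeft a) _ _ (fun b => rfl)
    have h2 : ∏ b : B, r (a * b) = (r a) ^ (Nat.card B) * ψ a P := by
      simp_rw [hr a]
      rw [Finset.prod_mul_distrib, Finset.prod_const, Finset.card_univ, hP, map_prod,
        Nat.card_eq_fintype_card]
    rw [h2] at h1
    exact eq_mul_inv_iff_mul_eq.mpr h1
  obtain ⟨u, hu⟩ : ∃ u : M, u ^ (Nat.card B) = P :=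
    ⟨(powCoprime hcop).symm P, by
      have := (powCoprime hcop).apply_symm_apply P
      rwa [powCoprime_apply] at this⟩
  refine ⟨u⁻¹, fun a => ?_⟩
  have key2 : (u * (ψ a u)⁻¹) ^ (Nat.card B) = (r a) ^ (Nat.card B) := by
    rw [mul_pow, inv_pow, ← map_pow, hu, key]
  have h3 : u * (ψ a u)⁻¹ = r a := hcop.pow_left_bijective.injective key2
  rw [← h3, map_inv, inv_inv]

/-- Vanishing of nonabelian `H¹` for a coprime action on a `q`-group. -/
theorem h1_vanish {q : ℕ} (hq : q.Prime) {B : Type*} [Group B] [Finite B]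
    (hB : ¬ q ∣ Nat.card B) (M : Type u) [Group M] [Finite M] (hM : IsPGroup q M)
    (ψ : B →* MulAut M) (r : B → M) (hr : ∀ a b, r (a * b) = r a * ψ a (r b)) :
    ∃ n : M, ∀ b, r b = n⁻¹ * ψ b n := by
  obtain hs | hs := subsingleton_or_nontrivial M
  · exact ⟨1, fun b => Subsingleton.elim _ _⟩
  have hF : Fact q.Prime := ⟨hq⟩
  set Z := Subgroup.center M with hZ
  have hZchar : ∀ (e : M ≃* M), Z.map e.toMonoidHom = Z := fun e =>
    Subgroup.characteristic_iff_map_eq.mp inferInstance e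
  have hmem : ∀ (b : B) (x : M), x ∈ Z → ψ b x ∈ Z := by
    intro b x hx
    have : ψ b x ∈ Z.map (ψ b : M ≃* M).toMonoidHom := ⟨x, hx, rfl⟩
    rwa [hZchar] at this
  have hcongr : ∀ (b : B) (x : M),
      (QuotientGroup.congr Z Z (ψ b : M ≃* M) (hZchar (ψ b))) ((x : M ⧸ Z)) =
        ((ψ b x : M) : M ⧸ Z) :=
    fun b x => QuotientGroup.congr_mk _ _ _ _ x
  let ψq : B →* MulAut (M ⧸ Z) := MonoidHom.mk'
    (fun b => QuotientGroup.congr Z Z (ψ b : M ≃* M) (hZchar (ψ b)))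
    (fun a b => by
      ext x
      obtain ⟨x, rfl⟩ := QuotientGroup.mk_surjective x
      simp only [MulAut.mul_apply]
      rw [hcongr, hcongr, hcongr, map_mul, MulAut.mul_apply])
  have hψq : ∀ (b : B) (x : M), ψq b ((x : M ⧸ Z)) = ((ψ b x : M) : M ⧸ Z) := hcongr
  have hZnt : Nontrivial Z := hM.center_nontrivial
  have hlt : Nat.card (M ⧸ Z) < Nat.card M := by
    have h1 : Z.index * Nat.card Z = Nat.card M := Subgroup.index_mul_card Z
    have h2 : Nat.card (M ⧸ Z) = Z.index := rfl
    have h3 : 1 < Nat.card Z := Finite.one_lt_card_iff_nontrivial.mpr hZnt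
    have h4 : 0 < Z.index := Nat.pos_of_ne_zero (by
      intro h0
      rw [h0, zero_mul] at h1
      exact (Nat.card_pos (α := M)).ne' h1.symm)
    rw [h2, ← h1]
    calc Z.index = Z.index * 1 := (mul_one _).symm
    _ < Z.index * Nat.card Z := by exact (Nat.mul_lt_mul_left h4).mpr h3
  obtain ⟨nb, hnb⟩ := h1_vanish hq hB (M ⧸ Z) (hM.to_quotient Z) ψq
    (fun b => ((r b : M) : M ⧸ Z)) (fun a b => by
      show ((r (a*b) : M) : M ⧸ Z) = ((r a : M) : M ⧸ Z) * (ψq a) ((r b : M) : M ⧸ Z)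
      rw [hr a b, QuotientGroup.mk_mul, hψq])
  obtain ⟨n, rfl⟩ := QuotientGroup.mk_surjective nb
  set r' : B → M := fun b => n * r b * (ψ b n)⁻¹ with hr'
  have hr'mem : ∀ b, r' b ∈ Z := by
    intro b
    rw [← QuotientGroup.eq_one_iff]
    show ((n * r b * (ψ b n)⁻¹ : M) : M ⧸ Z) = 1
    rw [QuotientGroup.mk_mul, QuotientGroup.mk_mul, QuotientGroup.mk_inv, hnb b, ← hψq]
    group
  have hr'coc : ∀ a b, r' (a * b) = r' a * ψ a (r' b) := by
    intro a b
    show n * r (a*b) * (ψ (a*b) n)⁻¹ = (n * r a * (ψ a n)⁻¹) * ψ a (n * r b * (ψ b n)⁻¹)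
    rw [hr a b, map_mul, map_mul, map_inv, map_mul, MulAut.mul_apply]
    group
  have hcop' : Nat.Coprime (Nat.card ↥Z) (Nat.card B) := by
    obtain ⟨k, hk⟩ := (hM.to_subgroup Z).exists_card_eq
    rw [hk]
    exact Nat.Coprime.pow_left _ ((hq.coprime_iff_not_dvd).mpr hB)
  open scoped IsMulCommutative in
  obtain ⟨m, hm⟩ := h1_vanish_comm hcop' (restrictAut ψ Z hmem)
    (fun b => (⟨r' b, hr'mem b⟩ : ↥Z))
    (fun a b => Subtype.ext (by simpa using hr'coc a b))
  refine ⟨(m : M) * n, fun b => ?_⟩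
  have hm' : r' b = (m : M)⁻¹ * ψ b (m : M) := by
    have := congrArg (Subtype.val) (hm b)
    simpa using this
  have : r b = n⁻¹ * r' b * ψ b n := by rw [hr']; group
  rw [this, hm', map_mul, mul_inv_rev]
  group
termination_by Nat.card M
decreasing_by exact hlt

/-- A cocycle on `A × B` trivial on `A × 1` is a coboundary, when `N` is a `q`-group
and `q ∤ |B|`. -/
theorem key_inj {q : ℕ} (hq : q.Prime) {A B N : Type*} [Group A] [Group B] [Group N]
    [Finite B] [Finite N] (hB : ¬ q ∣ Nat.card B) (hN : IsPGroup q N)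
    (ψ : A × B →* MulAut N) (e : A × B → N)
    (he : ∀ j j', e (j * j') = e j * ψ j (e j'))
    (h1 : ∀ x : A, e (x, 1) = 1) :
    ∃ n : N, ∀ j, e j = n⁻¹ * ψ j n := by
  set M : Subgroup N :=
    { carrier := {n : N | ∀ x : A, ψ (x, 1) n = n}
      one_mem' := fun x => map_one _
      mul_mem' := fun {a b} ha hb x => by rw [map_mul, ha x, hb x]
      inv_mem' := fun {a} ha x => by rw [map_inv, ha x] } with hM
  have hmemM : ∀ n : N, n ∈ M ↔ ∀ x : A, ψ (x, 1) n = n := fun n => Iff.rfl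
  have hcomm : ∀ (x : A) (b : B) (n : N), ψ (x, 1) (ψ (1, b) n) = ψ (1, b) (ψ (x, 1) n) := by
    intro x b n
    rw [← MulAut.mul_apply, ← MulAut.mul_apply, ← map_mul, ← map_mul]
    congr 2
    simp [Prod.ext_iff]
  have hstable : ∀ (b : B) (n : N), n ∈ M → ψ (1, b) n ∈ M := by
    intro b n hn x
    rw [hcomm, hn x]
  let ψ' : B →* MulAut ↥M := restrictAut (ψ.comp (MonoidHom.inr A B)) M
    (fun b n hn => hstable b n hn)
  have heM : ∀ b : B, e (1, b) ∈ M := by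
    intro b x
    have h1' : e ((x, 1) * (1, b)) = ψ (x, 1) (e (1, b)) := by
      rw [he, h1, one_mul]
    have h2' : e ((1, b) * (x, 1)) = e (1, b) := by
      rw [he, h1, map_one, mul_one]
    have : ((x, (1:B)) * (1, b)) = ((1, b) * (x, 1)) := by simp [Prod.ext_iff]
    rw [this, h2'] at h1'
    exact h1'.symm
  have hcoc : ∀ a b : B, (⟨e (1, a * b), heM _⟩ : ↥M) =
      ⟨e (1, a), heM _⟩ * ψ' a ⟨e (1, b), heM _⟩ := by
    intro a b
    apply Subtype.ext
    show e (1, a * b) = e (1, a) * ψ (1, a) (e (1, b))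
    rw [← he]
    congr 1
    simp
  obtain ⟨n, hn⟩ := h1_vanish hq hB (↥M) (hN.to_subgroup M) ψ' (fun b => ⟨e (1, b), heM _⟩) hcoc
  refine ⟨(n : N), fun j => ?_⟩
  obtain ⟨x, b⟩ := j
  have hsplit : ((x, b) : A × B) = (x, 1) * (1, b) := by simp
  have hnval : e (1, b) = (n : N)⁻¹ * ψ (1, b) (n : N) := by
    have := congrArg Subtype.val (hn b)
    exact this
  rw [hsplit, he, h1, one_mul, hnval, map_mul, map_inv]
  rw [n.2 x, ← MulAut.mul_apply, ← map_mul]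

instance sdpFinite {N G : Type*} [Group N] [Group G] [Finite N] [Finite G]
    (φ : G →* MulAut N) : Finite (N ⋊[φ] G) :=
  Finite.of_injective (fun s : N ⋊[φ] G => (s.left, s.right))
    (fun a b h => by
      obtain ⟨h1, h2⟩ := Prod.mk.injEq .. ▸ h
      exact SemidirectProduct.ext h1 h2)

section Extend

variable {Jq Jq' N : Type*} [Group Jq] [Group Jq'] [Group N]
  (φ : Jq × Jq' →* MulAut N) (g : Jq → N)
  (hg : ∀ x y, g (x * y) = g x * φ (x, 1) (g y))

/-- The image of the cocycle `g` inside the semidirect product. -/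
def kap : Jq →* (N ⋊[φ] (Jq × Jq')) :=
  MonoidHom.mk' (fun x => ⟨g x, (x, 1)⟩)
    (fun x y => by
      apply SemidirectProduct.ext
      · show g (x * y) = g x * φ (x, 1) (g y)
        exact hg x y
      · show ((x * y : Jq), (1 : Jq')) = ((x, 1) : Jq × Jq') * (y, 1)
        simp [Prod.ext_iff])

@[simp] lemma kap_left (x : Jq) : (kap φ g hg x).left = g x := rfl
@[simp] lemma kap_right (x : Jq) : (kap φ g hg x).right = (x, 1) := rfl

/-- Elements with trivial `Jq`-component commuting with the image of `g`. -/
def Esub : Subgroup (N ⋊[φ] (Jq × Jq')) where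
  carrier := {s | (∀ x : Jq, s * kap φ g hg x = kap φ g hg x * s) ∧ s.right.1 = 1}
  one_mem' := ⟨fun x => by rw [one_mul, mul_one], rfl⟩
  mul_mem' := by
    rintro a b ⟨ha, ha'⟩ ⟨hb, hb'⟩
    refine ⟨fun x => ?_, ?_⟩
    · rw [mul_assoc, hb x, ← mul_assoc, ha x, mul_assoc]
    · show (a.right * b.right).1 = 1
      rw [Prod.fst_mul, ha', hb', one_mul]
  inv_mem' := by
    rintro a ⟨ha, ha'⟩
    refine ⟨fun x => ?_, ?_⟩
    · calc a⁻¹ * kap φ g hg x = a⁻¹ * (kap φ g hg x * a) * a⁻¹ := by group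
      _ = a⁻¹ * (a * kap φ g hg x) * a⁻¹ := by rw [ha x]
      _ = kap φ g hg x * a⁻¹ := by group
    · show ((a⁻¹ : N ⋊[φ] _).right).1 = 1
      rw [SemidirectProduct.inv_right, Prod.fst_inv, ha', inv_one]

include hg in
/-- Key surjectivity step: an invariant cocycle on `Jq` extends to `Jq × Jq'`. -/
theorem extend_cocycle {q : ℕ} (hq : q.Prime) [Finite Jq] [Finite Jq'] [Finite N]
    (hJq' : ¬ q ∣ Nat.card Jq') (hN : IsPGroup q N)
    (hinv : ∀ b : Jq', ∃ n : N, ∀ x, g x = n⁻¹ * φ (1, b) (g x) * φ (x, 1) n) :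
    ∃ f : Jq × Jq' → N, (∀ j j', f (j * j') = f j * φ j (f j')) ∧ ∀ x, f (x, 1) = g x := by
  have hF : Fact q.Prime := ⟨hq⟩
  set E := Esub φ g hg with hE
  set σ : ↥E →* Jq' :=
    ((MonoidHom.snd Jq Jq').comp SemidirectProduct.rightHom).comp E.subtype with hσ
  have hσsurj : Function.Surjective σ := by
    intro b
    obtain ⟨nb, hnb⟩ := hinv b
    refine ⟨⟨⟨nb⁻¹, (1, b)⟩, ⟨fun x => ?_, rfl⟩⟩, rfl⟩
    apply SemidirectProduct.ext
    · show nb⁻¹ * φ (1, b) (g x) = g x * φ (x, 1) nb⁻¹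
      rw [map_inv]
      exact eq_mul_inv_iff_mul_eq.mpr (hnb x).symm
    · show ((1 : Jq), b) * (x, 1) = ((x, 1) : Jq × Jq') * (1, b)
      simp [Prod.ext_iff]
  have hkerP : IsPGroup q ↥σ.ker := by
    intro s
    have hright : ((s : ↥E) : N ⋊[φ] _).right = 1 := by
      have h1 : ((s : ↥E) : N ⋊[φ] _).right.1 = 1 := (s : ↥E).2.2
      have h2 : ((s : ↥E) : N ⋊[φ] _).right.2 = 1 := s.2
      exact Prod.ext h1 h2
    obtain ⟨k, hk⟩ := hN (((s : ↥E) : N ⋊[φ] _).left)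
    refine ⟨k, ?_⟩
    have hinj : Function.Injective (E.subtype.comp σ.ker.subtype) :=
      E.subtype_injective.comp σ.ker.subtype_injective
    apply hinj
    rw [map_pow, map_one]
    have hs : ((E.subtype.comp σ.ker.subtype) s : N ⋊[φ] _) =
        SemidirectProduct.inl (((s : ↥E) : N ⋊[φ] _).left) := by
      apply SemidirectProduct.ext
      · rfl
      · rw [SemidirectProduct.right_inl]
        exact hright
    rw [hs, ← map_pow, hk, map_one]
  have hcop : Nat.Coprime (Nat.card σ.ker) σ.ker.index := by
    rw [Subgroup.index_ker]
    obtain ⟨k, hk⟩ := hkerP.exists_card_eq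
    rw [hk]
    apply Nat.Coprime.pow_left
    refine (hq.coprime_iff_not_dvd).mpr (fun hdvd => hJq' ?_)
    exact hdvd.trans (Subgroup.card_subgroup_dvd_card σ.range)
  obtain ⟨D, hD⟩ := Subgroup.exists_right_complement'_of_coprime hcop
  have hDinj : ∀ d d' : ↥E, d ∈ D → d' ∈ D → σ d = σ d' → d = d' := by
    intro d d' hd hd' hσdd
    have h1 : d * d'⁻¹ ∈ σ.ker := by
      rw [MonoidHom.mem_ker, map_mul, map_inv, hσdd, mul_inv_cancel]
    have h2 : d * d'⁻¹ ∈ D := mul_mem hd (inv_mem hd')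
    have := Subgroup.disjoint_def.mp hD.disjoint h1 h2
    exact mul_inv_eq_one.mp this
  have hDsurj : ∀ b : Jq', ∃ d : ↥E, d ∈ D ∧ σ d = b := by
    intro b
    obtain ⟨s, hs⟩ := hσsurj b
    obtain ⟨⟨⟨k, hk⟩, ⟨d, hd⟩⟩, hkd⟩ := (hD.existsUnique s).exists
    refine ⟨d, hd, ?_⟩
    have : σ (k * d) = b := by rw [hkd]; exact hs
    rwa [map_mul, MonoidHom.mem_ker.mp hk, one_mul] at this
  choose w hwD hwσ using hDsurj
  have hwmul : ∀ b b', w (b * b') = w b * w b' := fun b b' =>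
    hDinj _ _ (hwD _) (mul_mem (hwD b) (hwD b'))
      (by rw [hwσ, map_mul, hwσ, hwσ])
  have hw1 : w 1 = 1 := hDinj _ _ (hwD 1) (one_mem D) (by rw [hwσ, map_one])
  set Φ : Jq × Jq' → N ⋊[φ] (Jq × Jq') :=
    fun j => kap φ g hg j.1 * ((w j.2 : ↥E) : N ⋊[φ] (Jq × Jq')) with hΦ
  have hΦright : ∀ j, (Φ j).right = j := by
    intro j
    have h1 : ((w j.2 : ↥E) : N ⋊[φ] _).right = ((1 : Jq), j.2) :=
      Prod.ext (w j.2 : ↥E).2.2 (hwσ j.2)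
    rw [hΦ]
    show (kap φ g hg j.1 * ((w j.2 : ↥E) : N ⋊[φ] _)).right = j
    rw [SemidirectProduct.mul_right, kap_right, h1]
    simp [Prod.ext_iff]
  have hΦmul : ∀ j j', Φ (j * j') = Φ j * Φ j' := by
    intro j j'
    have hcom : ((w j.2 : ↥E) : N ⋊[φ] _) * kap φ g hg j'.1
        = kap φ g hg j'.1 * ((w j.2 : ↥E) : N ⋊[φ] _) := (w j.2 : ↥E).2.1 j'.1
    show kap φ g hg (j.1 * j'.1) * ((w (j.2 * j'.2) : ↥E) : N ⋊[φ] _) = _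
    rw [map_mul, hwmul]
    push_cast
    calc kap φ g hg j.1 * kap φ g hg j'.1 *
          (((w j.2 : ↥E) : N ⋊[φ] _) * ((w j'.2 : ↥E) : N ⋊[φ] _))
        = kap φ g hg j.1 * ((((w j.2 : ↥E) : N ⋊[φ] _) * kap φ g hg j'.1) *
            ((w j'.2 : ↥E) : N ⋊[φ] _)) := by rw [hcom]; group
      _ = _ := by rw [hΦ]; group
  refine ⟨fun j => (Φ j).left, fun j j' => ?_, fun x => ?_⟩
  · show (Φ (j * j')).left = (Φ j).left * φ j ((Φ j').left)
    have h2 : (Φ (j * j')).left = (Φ j * Φ j').left := congrArg _ (hΦmul j j')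
    rw [SemidirectProduct.mul_left (Φ j) (Φ j'), hΦright j] at h2
    exact h2
  · show (Φ (x, 1)).left = g x
    rw [hΦ]
    show (kap φ g hg x * ((w 1 : ↥E) : N ⋊[φ] _)).left = g x
    rw [hw1]
    show (kap φ g hg x * (1 : N ⋊[φ] _)).left = g x
    rw [mul_one, kap_left]

end Extend

section Restrict

variable {Jq Jq' N : Type*} [Group Jq] [Group Jq'] [Group N]
  (φ : Jq × Jq' →* MulAut N)

/-- Restriction of a crossed homomorphism to `Jq × 1`. -/
def rCH (f : CrossedHom φ) : CrossedHom (φ.comp (MonoidHom.inl Jq Jq')) :=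
  ⟨fun x => f.1 (x, 1), fun x y => by
    have h := f.2 (x, 1) (y, 1)
    have hxy : ((x, 1) : Jq × Jq') * (y, 1) = (x * y, 1) := by
      rw [Prod.mk_mul_mk, mul_one]
    rw [hxy] at h
    exact h⟩

lemma hcommJ (x : Jq) (j' : Jq') (a : N) :
    φ (1, j') (φ (x, 1) a) = φ (x, 1) (φ (1, j') a) := by
  rw [← MulAut.mul_apply, ← MulAut.mul_apply, ← map_mul, ← map_mul]
  congr 2
  simp [Prod.ext_iff]

/-- Invariance of a cohomology class is preserved along `Cohomologous`. -/
lemma invariant_transfer (j' : Jq') {g h : Jq → N}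
    (hgh : Cohomologous (φ.comp (MonoidHom.inl Jq Jq')) g h)
    (hg : Cohomologous (φ.comp (MonoidHom.inl Jq Jq')) (fun x => φ (1, j') (g x)) g) :
    Cohomologous (φ.comp (MonoidHom.inl Jq Jq')) (fun x => φ (1, j') (h x)) h := by
  obtain ⟨m, hm⟩ := hgh
  obtain ⟨n, hn⟩ := hg
  refine ⟨(φ (1, j') m)⁻¹ * n * m, fun x => ?_⟩
  have hφg : φ (1, j') (g x) = n * g x * (φ (x, 1) n)⁻¹ := by
    conv_rhs => rw [hn x]
    show _ = n * (n⁻¹ * φ (1, j') (g x) * φ (x, 1) n) * (φ (x, 1) n)⁻¹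
    group
  show h x = ((φ (1, j') m)⁻¹ * n * m)⁻¹ * φ (1, j') (h x) *
    φ (x, 1) ((φ (1, j') m)⁻¹ * n * m)
  conv_rhs => rw [hm x]
  conv_lhs => rw [hm x]
  show m⁻¹ * g x * φ (x, 1) m = _ * φ (1, j') (m⁻¹ * g x * φ (x, 1) m) * _
  simp only [map_mul, map_inv]
  rw [hcommJ, hφg]
  group

end Restrict

end Stmt8Aux

/-- For nilpotent `J = J_q × J'_q` (`J_q` a `q`-group, `J'_q` a nilpotent `q'`-group)
acting on a finite `q`-group `N`, with `q` prime dividing `|J|`, the restriction map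
`res : H¹(J, N) → H¹(J_q, N)` is injective with image exactly the `J'_q`-invariant
classes `H¹(J_q, N)^{J'_q}`. -/
theorem stmt_8 {Jq Jq' N : Type*} [Group Jq] [Group Jq'] [Group N]
    [Finite Jq] [Finite Jq'] [Finite N]
    (q : ℕ) (hq : q.Prime) (hJq : IsPGroup q Jq) (hJq' : ¬ q ∣ Nat.card Jq')
    [Group.IsNilpotent Jq'] (hN : IsPGroup q N)
    (hdvd : q ∣ Nat.card (Jq × Jq'))
    (φ : Jq × Jq' →* MulAut N) :
    ∃ res : Quot (cohRel φ) → Quot (cohRel (φ.comp (MonoidHom.inl Jq Jq'))),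
      (∀ (f : CrossedHom φ) (g : CrossedHom (φ.comp (MonoidHom.inl Jq Jq'))),
        (∀ x : Jq, g.1 x = f.1 (x, 1)) →
        res (Quot.mk _ f) = Quot.mk _ g) ∧
      Function.Injective res ∧
      Set.range res = {c | ∀ g : CrossedHom (φ.comp (MonoidHom.inl Jq Jq')),
        Quot.mk _ g = c → ∀ j' : Jq',
          Cohomologous (φ.comp (MonoidHom.inl Jq Jq'))
            (fun x => φ (1, j') (g.1 x)) g.1} := by
  classical
  set res : Quot (cohRel φ) → Quot (cohRel (φ.comp (MonoidHom.inl Jq Jq'))) :=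
    Quot.lift (fun f => Quot.mk _ (Stmt8Aux.rCH φ f)) (by
      intro f₁ f₂ hrel
      apply Quot.sound
      obtain ⟨n, hn⟩ := hrel
      exact ⟨n, fun x => hn (x, 1)⟩) with hresdef
  refine ⟨res, ?_, ?_, ?_⟩
  · -- computation rule
    intro f g hfg
    have hg : g = Stmt8Aux.rCH φ f := Subtype.ext (funext fun x => hfg x)
    rw [hg]
  · -- injectivity
    intro c₁ c₂ h
    obtain ⟨f₁, rfl⟩ := Quot.exists_rep c₁
    obtain ⟨f₂, rfl⟩ := Quot.exists_rep c₂
    have h' : Quot.mk (cohRel (φ.comp (MonoidHom.inl Jq Jq'))) (Stmt8Aux.rCH φ f₁) =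
        Quot.mk _ (Stmt8Aux.rCH φ f₂) := h
    have hrel := ((Stmt8Aux.coh_equiv (φ.comp (MonoidHom.inl Jq Jq'))).eqvGen_iff).mp
      (Quot.eq.mp h')
    obtain ⟨n₀, hn₀⟩ := hrel
    apply Quot.sound
    -- twisted action
    set ψ : Jq × Jq' →* MulAut N := MonoidHom.mk'
      (fun j => MulAut.conj (f₁.1 j) * φ j)
      (fun j k => by
        ext x
        simp only [MulAut.mul_apply, MulAut.conj_apply]
        rw [f₁.2 j k, map_mul φ j k, MulAut.mul_apply]
        simp only [map_mul, map_inv]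
        try group) with hψdef
    have hψ : ∀ (j : Jq × Jq') (y : N), ψ j y = f₁.1 j * φ j y * (f₁.1 j)⁻¹ :=
      fun j y => rfl
    set e : Jq × Jq' → N := fun j => (n₀ * f₂.1 j * (φ j n₀)⁻¹) * (f₁.1 j)⁻¹ with hedef
    have he : ∀ j k, e (j * k) = e j * ψ j (e k) := by
      intro j k
      show (n₀ * f₂.1 (j * k) * (φ (j * k) n₀)⁻¹) * (f₁.1 (j * k))⁻¹ =
        ((n₀ * f₂.1 j * (φ j n₀)⁻¹) * (f₁.1 j)⁻¹) * ψ j ((n₀ * f₂.1 k * (φ k n₀)⁻¹) * (f₁.1 k)⁻¹)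
      rw [hψ, f₁.2 j k, f₂.2 j k, map_mul φ j k, MulAut.mul_apply]
      simp only [map_mul, map_inv]
      try group
    have h1 : ∀ x : Jq, e (x, 1) = 1 := by
      intro x
      show (n₀ * f₂.1 (x, 1) * (φ (x, 1) n₀)⁻¹) * (f₁.1 (x, 1))⁻¹ = 1
      rw [show f₂.1 (x, 1) = n₀⁻¹ * f₁.1 (x, 1) * φ (x, 1) n₀ from hn₀ x]
      group
    obtain ⟨n, hn⟩ := Stmt8Aux.key_inj hq hJq' hN ψ e he h1
    refine ⟨n * n₀, fun j => ?_⟩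
    have h := hn j
    rw [hψ] at h
    have h2 : n₀ * f₂.1 j * (φ j n₀)⁻¹ * (f₁.1 j)⁻¹ =
        n⁻¹ * (f₁.1 j * φ j n * (f₁.1 j)⁻¹) := h
    calc f₂.1 j = n₀⁻¹ * ((n₀ * f₂.1 j * (φ j n₀)⁻¹) * (f₁.1 j)⁻¹) * f₁.1 j * φ j n₀ := by
          group
      _ = n₀⁻¹ * (n⁻¹ * (f₁.1 j * φ j n * (f₁.1 j)⁻¹)) * f₁.1 j * φ j n₀ := by
          rw [← mul_assoc] at h2
          rw [h2]
          group
      _ = (n * n₀)⁻¹ * f₁.1 j * φ j (n * n₀) := by rw [map_mul, mul_inv_rev]; group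
  · -- the image
    ext c
    simp only [Set.mem_range, Set.mem_setOf_eq]
    constructor
    · rintro ⟨a, rfl⟩
      obtain ⟨f, rfl⟩ := Quot.exists_rep a
      intro g hg j'
      have h' : Quot.mk (cohRel (φ.comp (MonoidHom.inl Jq Jq'))) g =
          Quot.mk _ (Stmt8Aux.rCH φ f) := hg
      have hrel := ((Stmt8Aux.coh_equiv (φ.comp (MonoidHom.inl Jq Jq'))).eqvGen_iff).mp
        (Quot.eq.mp h')
      -- base invariance for the actual restriction
      have hbase : Cohomologous (φ.comp (MonoidHom.inl Jq Jq'))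
          (fun x => φ (1, j') ((Stmt8Aux.rCH φ f).1 x)) ((Stmt8Aux.rCH φ f).1) := by
        refine ⟨(f.1 (1, j'))⁻¹, fun x => ?_⟩
        have h1 := f.2 (x, 1) (1, j')
        have h2 := f.2 (1, j') (x, 1)
        have heq : ((x, 1) : Jq × Jq') * (1, j') = (1, j') * (x, 1) := by
          simp [Prod.ext_iff]
        rw [heq, h2] at h1
        -- h1 : f.1 (1,j') * φ (1,j') (f.1 (x,1)) = f.1 (x,1) * φ (x,1) (f.1 (1,j'))
        show f.1 (x, 1) = ((f.1 (1, j'))⁻¹)⁻¹ * φ (1, j') (f.1 (x, 1)) *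
          φ (x, 1) (f.1 (1, j'))⁻¹
        rw [inv_inv, map_inv, h1]
        group
      exact Stmt8Aux.invariant_transfer φ j'
        ((Stmt8Aux.coh_equiv _).symm hrel) hbase
    · intro hc
      obtain ⟨g, rfl⟩ := Quot.exists_rep c
      have hinv := hc g rfl
      have hg' : ∀ x y, g.1 (x * y) = g.1 x * φ (x, 1) (g.1 y) := fun x y => g.2 x y
      have hinv' : ∀ b : Jq', ∃ n : N, ∀ x, g.1 x = n⁻¹ * φ (1, b) (g.1 x) * φ (x, 1) n := by
        intro b
        obtain ⟨n, hn⟩ := hinv b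
        exact ⟨n, fun x => hn x⟩
      obtain ⟨f, hf, hfx⟩ := Stmt8Aux.extend_cocycle φ g.1 hg' hq hJq' hN hinv'
      refine ⟨Quot.mk _ (⟨f, hf⟩ : CrossedHom φ), ?_⟩
      show Quot.mk _ (Stmt8Aux.rCH φ ⟨f, hf⟩) = Quot.mk _ g
      have : Stmt8Aux.rCH φ (⟨f, hf⟩ : CrossedHom φ) = g :=
        Subtype.ext (funext fun x => hfx x)
      rw [this]
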